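/- Let A and B be unimodular positive-definite Hermitian 2×2 complex matrices. Then trace(A⁻¹·B) = e^{2·dist(A,B)} + e^{−2·dist(A,B)}; equivalently, the eigenvalues of A⁻¹·B are λ and λ⁻¹ for the real number λ = e^{2·dist(A,B)} ≥ 1. -/

import Mathlib

open Matrix
open scoped ComplexOrder

/-- The hyperbolic distance between two hermitian inner products on `ℂ²` (represented by
positive-definite matrices inducing the same volume): the maximal logarithmic expansion
of the `B`-norm relative to the `A`-norm. -/
noncomputable def hdist (A B : Matrix (Fin 2) (Fin 2) ℂ) : ℝ :=
  ⨆ v : {v : Fin 2 → ℂ // v ≠ 0},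
    (1 / 2) * Real.log ((star v.1 ⬝ᵥ B.mulVec v.1).re / (star v.1 ⬝ᵥ A.mulVec v.1).re)

lemma quadform_conj (N M : Matrix (Fin 2) (Fin 2) ℂ) (w : Fin 2 → ℂ) :
    star w ⬝ᵥ (Nᴴ * M * N) *ᵥ w = star (N *ᵥ w) ⬝ᵥ M *ᵥ (N *ᵥ w) := by
  simp only [star_mulVec, dotProduct_mulVec, vecMul_vecMul]

lemma normSq_pos_of_ne_zero (w : Fin 2 → ℂ) (hw : w ≠ 0) :
    0 < (star w ⬝ᵥ w).re := by
  have := (Matrix.PosDef.one (n := Fin 2) (R := ℂ)).re_dotProduct_pos hw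
  simpa [one_mulVec] using this

/-- Rayleigh bound for a positive definite 2×2 matrix. -/
lemma rayleigh_le (M : Matrix (Fin 2) (Fin 2) ℂ) (hM : M.PosDef) (w : Fin 2 → ℂ) :
    (star w ⬝ᵥ M *ᵥ w).re
      ≤ max (hM.1.eigenvalues 0) (hM.1.eigenvalues 1) * (star w ⬝ᵥ w).re := by
  classical
  set U : Matrix (Fin 2) (Fin 2) ℂ := ↑hM.1.eigenvectorUnitary with hUdef
  have hUU : U * star U = 1 := (Matrix.mem_unitaryGroup_iff).mp hM.1.eigenvectorUnitary.2
  set d : Fin 2 → ℝ := hM.1.eigenvalues with hddef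
  set u : Fin 2 → ℂ := star U *ᵥ w with hu
  have hspec : M = U * diagonal (Complex.ofReal ∘ d) * star U := hM.1.spectral_theorem
  have key : star w ⬝ᵥ M *ᵥ w = star u ⬝ᵥ (diagonal (Complex.ofReal ∘ d)) *ᵥ u := by
    have h := quadform_conj (star U) (diagonal (Complex.ofReal ∘ d)) w
    rw [star_eq_conjTranspose U, conjTranspose_conjTranspose,
      ← star_eq_conjTranspose U] at h
    rw [hspec]
    exact h
  have key2 : star w ⬝ᵥ w = star u ⬝ᵥ u := by
    have h := quadform_conj (star U) 1 w
    rw [star_eq_conjTranspose U, conjTranspose_conjTranspose, ← star_eq_conjTranspose U,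
      mul_one, hUU, one_mulVec, one_mulVec] at h
    exact h
  have hdiag : (star u ⬝ᵥ (diagonal (Complex.ofReal ∘ d)) *ᵥ u).re
      = d 0 * Complex.normSq (u 0) + d 1 * Complex.normSq (u 1) := by
    simp [dotProduct, mulVec_diagonal, Fin.sum_univ_two, Complex.normSq]
    ring
  have hnorm : (star u ⬝ᵥ u).re = Complex.normSq (u 0) + Complex.normSq (u 1) := by
    simp [dotProduct, Fin.sum_univ_two, Complex.normSq]
  rw [key, key2, hdiag, hnorm]
  have h0 : d 0 ≤ max (d 0) (d 1) := le_max_left _ _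
  have h1 : d 1 ≤ max (d 0) (d 1) := le_max_right _ _
  nlinarith [Complex.normSq_nonneg (u 0), Complex.normSq_nonneg (u 1)]

/-- For unimodular positive-definite Hermitian `2×2` matrices `A, B` one has
`trace(A⁻¹B) = e^{2 dist(A,B)} + e^{-2 dist(A,B)}`; equivalently the eigenvalues of `A⁻¹B`
are `λ` and `λ⁻¹` with `λ = e^{2 dist(A,B)} ≥ 1` (note `det(A⁻¹B) = 1`). -/
theorem trace_eq_exp_hdist (A B : Matrix (Fin 2) (Fin 2) ℂ)
    (hA : A.PosDef) (hAdet : A.det = 1)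
    (hB : B.PosDef) (hBdet : B.det = 1) :
    Matrix.trace (A⁻¹ * B)
      = ((Real.exp (2 * hdist A B) + Real.exp (-(2 * hdist A B)) : ℝ) : ℂ) ∧
    1 ≤ Real.exp (2 * hdist A B) := by
  classical
  set C : Matrix (Fin 2) (Fin 2) ℂ := (open scoped MatrixOrder in CFC.sqrt A) with hCdef
  have hCherm : C.IsHermitian := by
    open scoped MatrixOrder in exact (CFC.sqrt_nonneg A).posSemidef.1
  have hCsq : C * C = A := by
    open scoped MatrixOrder in exact CFC.sqrt_mul_sqrt_self A hA.posSemidef.nonneg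
  have hCdet : C.det * C.det = 1 := by rw [← det_mul, hCsq, hAdet]
  have hCdetUnit : IsUnit C.det := IsUnit.of_mul_eq_one _ hCdet
  have hCinv : C⁻¹ * C = 1 := nonsing_inv_mul C hCdetUnit
  have hCinv' : C * C⁻¹ = 1 := mul_nonsing_inv C hCdetUnit
  have hCinvherm : C⁻¹.IsHermitian := hCherm.inv
  set M : Matrix (Fin 2) (Fin 2) ℂ := C⁻¹ * B * C⁻¹ with hMdef
  have hMquad : ∀ w : Fin 2 → ℂ,
      star w ⬝ᵥ M *ᵥ w = star (C⁻¹ *ᵥ w) ⬝ᵥ B *ᵥ (C⁻¹ *ᵥ w) := by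
    intro w
    have := quadform_conj (C⁻¹) B w
    rwa [hCinvherm.eq] at this
  have hCinvinj : Function.Injective (C⁻¹.mulVec) := by
    apply Matrix.mulVec_injective_iff_isUnit.mpr
    exact isUnit_nonsing_inv_iff.mpr (isUnit_iff_isUnit_det C |>.mpr hCdetUnit)
  have hCinj : Function.Injective (C.mulVec) := by
    apply Matrix.mulVec_injective_iff_isUnit.mpr
    exact isUnit_iff_isUnit_det C |>.mpr hCdetUnit
  have hM : M.PosDef := by
    refine Matrix.PosDef.of_dotProduct_mulVec_pos ?_ ?_
    · have h : C⁻¹ * B * C⁻¹ = (C⁻¹)ᴴ * B * C⁻¹ := by rw [hCinvherm.eq]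
      rw [hMdef, h]
      exact isHermitian_conjTranspose_mul_mul _ hB.1
    · intro w hw
      rw [hMquad w]
      apply hB.dotProduct_mulVec_pos
      intro h0
      exact hw (hCinvinj (by rw [mulVec_zero]; exact h0))
  set d : Fin 2 → ℝ := hM.1.eigenvalues with hddef
  have hd0 : 0 < d 0 := hM.eigenvalues_pos 0
  have hd1 : 0 < d 1 := hM.eigenvalues_pos 1
  set μ : ℝ := max (d 0) (d 1) with hμdef
  have hμpos : 0 < μ := lt_max_of_lt_left hd0
  have hMdet : M.det = 1 := by
    have h1 : M.det = C⁻¹.det * B.det * C⁻¹.det := by rw [hMdef, det_mul, det_mul]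
    rw [h1, det_nonsing_inv, hBdet, mul_one]
    simp only [Ring.inverse_eq_inv]
    rw [← mul_inv, hCdet, inv_one]
  have hprod : d 0 * d 1 = 1 := by
    have h : M.det = (d 0 : ℂ) * (d 1 : ℂ) := by
      rw [hM.1.det_eq_prod_eigenvalues, Fin.prod_univ_two]; rfl
    rw [hMdet] at h
    have h2 : ((d 0 * d 1 : ℝ) : ℂ) = 1 := by push_cast; rw [← h]
    exact_mod_cast h2
  have hMtrace : M.trace = ((d 0 + d 1 : ℝ) : ℂ) := by
    set U : Matrix (Fin 2) (Fin 2) ℂ := ↑hM.1.eigenvectorUnitary with hUdef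
    have hspec : M = U * diagonal (Complex.ofReal ∘ d) * star U := hM.1.spectral_theorem
    have hUU : star U * U = 1 := (Matrix.mem_unitaryGroup_iff').mp hM.1.eigenvectorUnitary.2
    calc M.trace = (U * diagonal (Complex.ofReal ∘ d) * star U).trace := by rw [← hspec]
      _ = (star U * (U * diagonal (Complex.ofReal ∘ d))).trace :=
          trace_mul_comm (U * diagonal (Complex.ofReal ∘ d)) (star U)
      _ = (diagonal (Complex.ofReal ∘ d)).trace := by rw [← mul_assoc, hUU, one_mul]
      _ = ((d 0 + d 1 : ℝ) : ℂ) := by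
          simp [trace, Fin.sum_univ_two, diag]
  have htraceAB : (A⁻¹ * B).trace = M.trace := by
    have hAinv : A⁻¹ = C⁻¹ * C⁻¹ := by rw [← hCsq, Matrix.mul_inv_rev]
    rw [hAinv, hMdef]
    exact (trace_mul_cycle C⁻¹ B C⁻¹).symm
  have hratio : ∀ v : Fin 2 → ℂ,
      star v ⬝ᵥ B *ᵥ v = star (C *ᵥ v) ⬝ᵥ M *ᵥ (C *ᵥ v) ∧
      star v ⬝ᵥ A *ᵥ v = star (C *ᵥ v) ⬝ᵥ (C *ᵥ v) := by
    intro v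
    constructor
    · rw [hMquad (C *ᵥ v), mulVec_mulVec, hCinv, one_mulVec]
    · have h := quadform_conj C 1 v
      rw [hCherm.eq, mul_one, hCsq, one_mulVec] at h
      exact h
  obtain ⟨imax, himax⟩ : ∃ i, d i = μ := by
    rcases le_total (d 0) (d 1) with h | h
    · exact ⟨1, (max_eq_right h).symm⟩
    · exact ⟨0, (max_eq_left h).symm⟩
  set w₀ : Fin 2 → ℂ := ⇑(hM.1.eigenvectorBasis imax) with hw₀def
  have hw₀ne : w₀ ≠ 0 := fun h => hM.1.eigenvectorBasis.orthonormal.ne_zero imax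
    (by simpa [hw₀def] using congrArg (WithLp.toLp 2) h)
  have hw₀eig : M *ᵥ w₀ = (d imax : ℂ) • w₀ := by
    have h := hM.1.mulVec_eigenvectorBasis imax
    rw [hw₀def]
    convert h using 1
    exact Complex.coe_smul _ _
  set f : {v : Fin 2 → ℂ // v ≠ 0} → ℝ := fun v =>
    (1 / 2) * Real.log ((star v.1 ⬝ᵥ B.mulVec v.1).re / (star v.1 ⬝ᵥ A.mulVec v.1).re)
    with hfdef
  haveI : Nonempty {v : Fin 2 → ℂ // v ≠ 0} :=
    ⟨⟨![1, 0], fun h => by have := congrFun h 0; simp at this⟩⟩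
  have hhd : hdist A B = ⨆ p, f p := rfl
  have hub : ∀ p : {v : Fin 2 → ℂ // v ≠ 0}, f p ≤ (1 / 2) * Real.log μ := by
    rintro ⟨v, hv⟩
    obtain ⟨hnum, hden⟩ := hratio v
    set w : Fin 2 → ℂ := C *ᵥ v with hwdef
    have hwne : w ≠ 0 := fun h0 => hv (hCinj (by rw [mulVec_zero]; exact h0))
    have hdenpos : 0 < (star v ⬝ᵥ A *ᵥ v).re := by
      rw [hden]; exact normSq_pos_of_ne_zero w hwne
    have hnumpos : 0 < (star v ⬝ᵥ B *ᵥ v).re := hB.re_dotProduct_pos hv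
    have hnumle : (star v ⬝ᵥ B *ᵥ v).re ≤ μ * (star v ⬝ᵥ A *ᵥ v).re := by
      rw [hnum, hden]
      exact rayleigh_le M hM w
    have hq : (star v ⬝ᵥ B *ᵥ v).re / (star v ⬝ᵥ A *ᵥ v).re ≤ μ :=
      (div_le_iff₀ hdenpos).mpr hnumle
    have hqpos : 0 < (star v ⬝ᵥ B *ᵥ v).re / (star v ⬝ᵥ A *ᵥ v).re :=
      div_pos hnumpos hdenpos
    have hlog : Real.log ((star v ⬝ᵥ B *ᵥ v).re / (star v ⬝ᵥ A *ᵥ v).re) ≤ Real.log μ :=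
      Real.log_le_log hqpos hq
    simp only [hfdef]
    linarith
  set p₀ : {v : Fin 2 → ℂ // v ≠ 0} :=
    ⟨C⁻¹ *ᵥ w₀, fun h0 => hw₀ne (hCinvinj (by rw [mulVec_zero]; exact h0))⟩ with hp₀def
  have hCp₀ : C *ᵥ p₀.1 = w₀ := by
    show C *ᵥ (C⁻¹ *ᵥ w₀) = w₀
    rw [mulVec_mulVec, hCinv', one_mulVec]
  have hfp₀ : f p₀ = (1 / 2) * Real.log μ := by
    obtain ⟨hnum, hden⟩ := hratio p₀.1
    have hs : 0 < (star w₀ ⬝ᵥ w₀).re := normSq_pos_of_ne_zero w₀ hw₀ne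
    have hnum' : (star p₀.1 ⬝ᵥ B *ᵥ p₀.1).re = μ * (star w₀ ⬝ᵥ w₀).re := by
      rw [hnum, hCp₀, hw₀eig, dotProduct_smul, smul_eq_mul, Complex.re_ofReal_mul, himax]
    have hden' : (star p₀.1 ⬝ᵥ A *ᵥ p₀.1).re = (star w₀ ⬝ᵥ w₀).re := by rw [hden, hCp₀]
    have hcanc : μ * (star w₀ ⬝ᵥ w₀).re / (star w₀ ⬝ᵥ w₀).re = μ := by
      rw [mul_div_assoc, div_self hs.ne', mul_one]
    simp only [hfdef]
    rw [hnum', hden', hcanc]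
  have hsup : hdist A B = (1 / 2) * Real.log μ := by
    rw [hhd]
    apply le_antisymm
    · exact ciSup_le hub
    · rw [← hfp₀]
      exact le_ciSup ⟨(1 / 2) * Real.log μ, by rintro x ⟨p, rfl⟩; exact hub p⟩ p₀
  have hexp : Real.exp (2 * hdist A B) = μ := by
    rw [hsup, show 2 * ((1 / 2) * Real.log μ) = Real.log μ by ring]
    exact Real.exp_log hμpos
  have hexpneg : Real.exp (-(2 * hdist A B)) = μ⁻¹ := by
    rw [Real.exp_neg, hexp]
  constructor
  · rw [htraceAB, hMtrace, hexp, hexpneg]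
    norm_cast
    rcases le_total (d 0) (d 1) with h | h
    · rw [hμdef, max_eq_right h]
      have hinv : (d 1)⁻¹ = d 0 := by
        field_simp
        nlinarith [hprod]
      rw [hinv]; ring
    · rw [hμdef, max_eq_left h]
      have hinv : (d 0)⁻¹ = d 1 := by
        field_simp
        nlinarith [hprod]
      rw [hinv]
  · rw [hexp]
    nlinarith [le_max_left (d 0) (d 1), le_max_right (d 0) (d 1)]
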